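/- Let m ≥ 1, μ ∈ [0,1), and suppose f : ℝ^{2m} × ℝ → ℝ satisfies ‖f(x,v)‖² ≤ (μ/m)‖x‖² + ω(‖v‖) for all x ∈ ℝ^{2m}, v ∈ ℝ, where ω is of class K. Let V(x) = xᵀPx with P as above. Then along the system x⁺ = Ax + G f(x,v) + G ε + H v one has V(x⁺) ≤ λ V(x) + ϱ_u(‖v‖) + ϱ_e(‖ε‖), where λ = 1 − (1−μ)²/m ∈ [0,1), ϱ_u(s) = m(2−μ)ω(s) + m s², and ϱ_e(s) = m·(2−μ)/(1−μ)·s². -/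

import Mathlib

open Matrix

/-- Upper shift matrix. -/
def Smat (m : ℕ) : Matrix (Fin m) (Fin m) ℝ :=
  Matrix.of fun i j => if (i : ℕ) + 1 = (j : ℕ) then 1 else 0

/-- Last basis vector. -/
def Bvec (m : ℕ) : Fin m → ℝ := fun i => if (i : ℕ) = m - 1 then 1 else 0

/-- A = diag(S, S). -/
def Amat (m : ℕ) : Matrix (Fin m ⊕ Fin m) (Fin m ⊕ Fin m) ℝ :=
  Matrix.fromBlocks (Smat m) 0 0 (Smat m)

/-- G = col(B, 0). -/
def Gvec (m : ℕ) : Fin m ⊕ Fin m → ℝ := Sum.elim (Bvec m) 0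

/-- H = col(0, B). -/
def Hvec (m : ℕ) : Fin m ⊕ Fin m → ℝ := Sum.elim 0 (Bvec m)

/-- R = diag(1, 2, …, m). -/
def Rmat (m : ℕ) : Matrix (Fin m) (Fin m) ℝ :=
  Matrix.diagonal fun i => ((i : ℕ) : ℝ) + 1

/-- P = diag(R, R). -/
def Pmat (m : ℕ) : Matrix (Fin m ⊕ Fin m) (Fin m ⊕ Fin m) ℝ :=
  Matrix.fromBlocks (Rmat m) 0 0 (Rmat m)

/-- A class-K function: continuous, strictly increasing on `[0, ∞)`, vanishing at `0`. -/
def IsClassK (ω : ℝ → ℝ) : Prop :=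
  ContinuousOn ω (Set.Ici 0) ∧ StrictMonoOn ω (Set.Ici 0) ∧ ω 0 = 0

noncomputable def ext' (m : ℕ) (y : Fin m → ℝ) : ℕ → ℝ := fun j => if h : j < m then y ⟨j, h⟩ else 0

lemma smat_apply (m : ℕ) (y : Fin m → ℝ) (i : Fin m) :
    (Smat m *ᵥ y) i = ext' m y ((i : ℕ) + 1) := by
  simp only [Smat, mulVec, dotProduct, Matrix.of_apply, ite_mul, one_mul, zero_mul, ext']
  by_cases h : (i : ℕ) + 1 < m
  · rw [dif_pos h, Finset.sum_eq_single (⟨(i:ℕ)+1, h⟩ : Fin m)]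
    · simp
    · intro b _ hb
      rw [if_neg]
      intro hc
      exact hb (Fin.ext hc.symm)
    · simp
  · rw [dif_neg h]
    apply Finset.sum_eq_zero
    intro b _
    rw [if_neg]
    intro hc
    exact h (hc ▸ b.isLt)

lemma key_sum (m : ℕ) (hm : 1 ≤ m) (y : Fin m → ℝ) (c : ℝ) :
    ∑ i : Fin m, (((i : ℕ) : ℝ) + 1) * ((Smat m *ᵥ y) i + c * Bvec m i) ^ 2
      = ∑ i : Fin m, (((i : ℕ) : ℝ) + 1) * (y i) ^ 2 - ∑ i : Fin m, (y i) ^ 2 + m * c ^ 2 := by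
  have h1 : ∀ i : Fin m, (((i : ℕ) : ℝ) + 1) * ((Smat m *ᵥ y) i + c * Bvec m i) ^ 2
      = (fun j : ℕ => ((j : ℝ) + 1) * (ext' m y (j+1) + c * (if j = m - 1 then 1 else 0)) ^ 2) (i : ℕ) := by
    intro i; rw [smat_apply]; rfl
  rw [Finset.sum_congr rfl (fun i _ => h1 i), Fin.sum_univ_eq_sum_range
    (fun j : ℕ => ((j : ℝ) + 1) * (ext' m y (j+1) + c * (if j = m - 1 then 1 else 0)) ^ 2) m]
  have h2 : ∑ i : Fin m, (((i : ℕ) : ℝ) + 1) * (y i) ^ 2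
      = ∑ j ∈ Finset.range m, ((j : ℝ) + 1) * (ext' m y j) ^ 2 := by
    rw [← Fin.sum_univ_eq_sum_range (fun j => ((j : ℝ) + 1) * (ext' m y j) ^ 2) m]
    apply Finset.sum_congr rfl
    intro i _
    simp [ext', i.isLt]
  have h3 : ∑ i : Fin m, (y i) ^ 2 = ∑ j ∈ Finset.range m, (ext' m y j) ^ 2 := by
    rw [← Fin.sum_univ_eq_sum_range (fun j => (ext' m y j) ^ 2) m]
    apply Finset.sum_congr rfl
    intro i _
    simp [ext', i.isLt]
  rw [h2, h3]
  obtain ⟨n, rfl⟩ : ∃ n, m = n + 1 := ⟨m - 1, (Nat.succ_pred_eq_of_pos hm).symm⟩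
  rw [Finset.sum_range_succ]
  have hlast : ext' (n+1) y (n+1) = 0 := by simp [ext']
  rw [show (n + 1) - 1 = n from rfl]
  simp only [hlast, if_pos rfl, zero_add, mul_one]
  have h4 : ∀ j ∈ Finset.range n, ((j:ℝ)+1) * (ext' (n+1) y (j+1) + c * (if j = n then 1 else 0)) ^ 2
      = ((j:ℝ)+1) * (ext' (n+1) y (j+1)) ^ 2 := by
    intro j hj
    rw [if_neg (Finset.mem_range.mp hj).ne, mul_zero, add_zero]
  rw [Finset.sum_congr rfl h4]
  have h5 : ∑ j ∈ Finset.range n, ((j:ℝ)+1) * (ext' (n+1) y (j+1)) ^ 2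
      = ∑ j ∈ Finset.range (n+1), (j:ℝ) * (ext' (n+1) y j) ^ 2 := by
    rw [Finset.sum_range_succ' (fun j => (j:ℝ) * (ext' (n+1) y j) ^ 2) n]
    push_cast
    simp
  rw [h5]
  push_cast
  rw [← Finset.sum_sub_distrib]
  ring_nf

lemma quad_eq (m : ℕ) (w : Fin m ⊕ Fin m → ℝ) :
    w ⬝ᵥ (Pmat m *ᵥ w) = ∑ i : Fin m, (((i:ℕ):ℝ)+1) * (w (Sum.inl i))^2
      + ∑ i : Fin m, (((i:ℕ):ℝ)+1) * (w (Sum.inr i))^2 := by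
  have hP : ∀ j : Fin m ⊕ Fin m, (Pmat m *ᵥ w) j =
      (Sum.elim (fun i : Fin m => ((i:ℕ):ℝ)+1) (fun i : Fin m => ((i:ℕ):ℝ)+1)) j * w j := by
    intro j
    rw [Pmat, show Matrix.fromBlocks (Rmat m) 0 0 (Rmat m) =
      Matrix.diagonal (Sum.elim (fun i : Fin m => ((i:ℕ):ℝ)+1) (fun i : Fin m => ((i:ℕ):ℝ)+1)) by
        rw [Rmat, Matrix.fromBlocks_diagonal]]
    rw [Matrix.mulVec_diagonal]
  simp only [dotProduct, hP]
  rw [Fintype.sum_sum_type]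
  congr 1 <;> (apply Finset.sum_congr rfl; intro i _; simp; ring)

lemma z_inl (m : ℕ) (x : Fin m ⊕ Fin m → ℝ) (a e v : ℝ) (i : Fin m) :
    (Amat m *ᵥ x + a • Gvec m + e • Gvec m + v • Hvec m) (Sum.inl i)
      = (Smat m *ᵥ (x ∘ Sum.inl)) i + (a + e) * Bvec m i := by
  simp [Amat, Gvec, Hvec, Matrix.fromBlocks_mulVec]
  ring

lemma z_inr (m : ℕ) (x : Fin m ⊕ Fin m → ℝ) (a e v : ℝ) (i : Fin m) :
    (Amat m *ᵥ x + a • Gvec m + e • Gvec m + v • Hvec m) (Sum.inr i)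
      = (Smat m *ᵥ (x ∘ Sum.inr)) i + v * Bvec m i := by
  simp [Amat, Gvec, Hvec, Matrix.fromBlocks_mulVec]

lemma block_lower (m : ℕ) (y : Fin m → ℝ) :
    ∑ i : Fin m, (y i)^2 ≤ ∑ i : Fin m, (((i:ℕ):ℝ)+1) * (y i)^2 := by
  apply Finset.sum_le_sum
  intro i _
  nlinarith [sq_nonneg (y i), (Nat.cast_nonneg (i:ℕ) : (0:ℝ) ≤ (i:ℕ))]

lemma block_upper (m : ℕ) (y : Fin m → ℝ) :
    ∑ i : Fin m, (((i:ℕ):ℝ)+1) * (y i)^2 ≤ m * ∑ i : Fin m, (y i)^2 := by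
  rw [Finset.mul_sum]
  apply Finset.sum_le_sum
  intro i _
  have h : ((i:ℕ):ℝ) + 1 ≤ m := by exact_mod_cast Nat.succ_le_of_lt i.isLt
  nlinarith [sq_nonneg (y i)]

theorem lyapunov_decrease (m : ℕ) (hm : 1 ≤ m) (μ : ℝ) (hμ : μ ∈ Set.Ico (0 : ℝ) 1)
    (ω : ℝ → ℝ) (hω : IsClassK ω)
    (f : (Fin m ⊕ Fin m → ℝ) → ℝ → ℝ)
    (hf : ∀ (x : Fin m ⊕ Fin m → ℝ) (v : ℝ),
      (f x v) ^ 2 ≤ μ / m * (∑ i, (x i) ^ 2) + ω |v|) :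
    (1 - (1 - μ) ^ 2 / m) ∈ Set.Ico (0 : ℝ) 1 ∧
    ∀ (x : Fin m ⊕ Fin m → ℝ) (v ε : ℝ),
      (Amat m *ᵥ x + f x v • Gvec m + ε • Gvec m + v • Hvec m) ⬝ᵥ
          (Pmat m *ᵥ (Amat m *ᵥ x + f x v • Gvec m + ε • Gvec m + v • Hvec m)) ≤
        (1 - (1 - μ) ^ 2 / m) * (x ⬝ᵥ (Pmat m *ᵥ x)) +
          (m * (2 - μ) * ω |v| + m * v ^ 2) + m * (2 - μ) / (1 - μ) * ε ^ 2 := by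
  obtain ⟨hμ0, hμ1⟩ := hμ
  have hM1 : (1:ℝ) ≤ (m:ℝ) := by exact_mod_cast hm
  have hM0 : (0:ℝ) < (m:ℝ) := by linarith
  have h1μ : (0:ℝ) < 1 - μ := by linarith
  constructor
  · constructor
    · have h1 : (1 - μ)^2 ≤ 1 := by nlinarith
      have : (1 - μ)^2 / m ≤ 1 := by
        rw [div_le_one hM0]; linarith
      linarith
    · have : 0 < (1 - μ)^2 / m := by positivity
      linarith
  intro x v ε
  set F := f x v with hF
  set z := Amat m *ᵥ x + F • Gvec m + ε • Gvec m + v • Hvec m with hz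
  rw [show z ⬝ᵥ (Pmat m *ᵥ z) = _ from quad_eq m z]
  have e1 : ∑ i : Fin m, (((i:ℕ):ℝ)+1) * (z (Sum.inl i))^2
      = ∑ i : Fin m, (((i:ℕ):ℝ)+1) * (x (Sum.inl i))^2 - ∑ i : Fin m, (x (Sum.inl i))^2
        + m * (F + ε)^2 := by
    have : ∀ i : Fin m, z (Sum.inl i) = (Smat m *ᵥ (x ∘ Sum.inl)) i + (F + ε) * Bvec m i :=
      fun i => z_inl m x F ε v i
    rw [Finset.sum_congr rfl (fun i _ => by rw [this i])]
    rw [key_sum m hm (x ∘ Sum.inl) (F + ε)]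
    rfl
  have e2 : ∑ i : Fin m, (((i:ℕ):ℝ)+1) * (z (Sum.inr i))^2
      = ∑ i : Fin m, (((i:ℕ):ℝ)+1) * (x (Sum.inr i))^2 - ∑ i : Fin m, (x (Sum.inr i))^2
        + m * v^2 := by
    have : ∀ i : Fin m, z (Sum.inr i) = (Smat m *ᵥ (x ∘ Sum.inr)) i + v * Bvec m i :=
      fun i => z_inr m x F ε v i
    rw [Finset.sum_congr rfl (fun i _ => by rw [this i])]
    rw [key_sum m hm (x ∘ Sum.inr) v]
    rfl
  rw [e1, e2]
  set Q1 := ∑ i : Fin m, (((i:ℕ):ℝ)+1) * (x (Sum.inl i))^2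
  set Q2 := ∑ i : Fin m, (((i:ℕ):ℝ)+1) * (x (Sum.inr i))^2
  set N1 := ∑ i : Fin m, (x (Sum.inl i))^2
  set N2 := ∑ i : Fin m, (x (Sum.inr i))^2
  have hQ : x ⬝ᵥ (Pmat m *ᵥ x) = Q1 + Q2 := quad_eq m x
  have hNsum : ∑ i : Fin m ⊕ Fin m, (x i)^2 = N1 + N2 := by
    rw [Fintype.sum_sum_type]
  have hQle : Q1 + Q2 ≤ m * (N1 + N2) := by
    have := block_upper m (x ∘ Sum.inl)
    have := block_upper m (x ∘ Sum.inr)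
    simp only [Function.comp] at *
    linarith
  have hN0 : 0 ≤ N1 + N2 := by positivity
  -- hf bound
  have hfb : F ^ 2 ≤ μ / m * (N1 + N2) + ω |v| := by
    rw [← hNsum]; exact hf x v
  -- Young
  have hd : (2 - μ) / (1 - μ) * (1 - μ) = 2 - μ := div_mul_cancel₀ _ (ne_of_gt h1μ)
  have hyoung : (F + ε)^2 ≤ (2 - μ) * F^2 + (2 - μ)/(1 - μ) * ε^2 := by
    nlinarith [sq_nonneg ((1 - μ) * F - ε), h1μ, hd, sq_nonneg ε, sq_nonneg F]
  -- multiply hf by m(2-μ)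
  have hfm : (m:ℝ) * (2 - μ) * F^2 ≤ (2 - μ) * μ * (N1 + N2) + m * (2 - μ) * ω |v| := by
    have h2μ : (0:ℝ) ≤ 2 - μ := by linarith
    have := mul_le_mul_of_nonneg_left hfb (by positivity : (0:ℝ) ≤ m * (2 - μ))
    have hcancel : (m:ℝ) * (2 - μ) * (μ / m * (N1 + N2)) = (2 - μ) * μ * (N1 + N2) := by
      field_simp
    nlinarith [this, hcancel]
  -- Q ≤ mN gives (1-μ)²/m Q ≤ (1-μ)² N
  have hQN : (1 - μ)^2 / m * (Q1 + Q2) ≤ (1 - μ)^2 * (N1 + N2) := by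
    calc (1 - μ)^2 / m * (Q1 + Q2) ≤ (1 - μ)^2 / m * (m * (N1 + N2)) :=
          mul_le_mul_of_nonneg_left hQle (by positivity)
      _ = (1 - μ)^2 * (N1 + N2) := by field_simp
  -- multiply Young by m
  have hyoungm : (m:ℝ) * (F + ε)^2 ≤ m * (2 - μ) * F^2 + m * (2 - μ) / (1 - μ) * ε^2 := by
    have := mul_le_mul_of_nonneg_left hyoung (le_of_lt hM0)
    calc (m:ℝ) * (F + ε)^2 ≤ m * ((2 - μ) * F^2 + (2 - μ)/(1 - μ) * ε^2) := this
      _ = m * (2 - μ) * F^2 + m * (2 - μ) / (1 - μ) * ε^2 := by ring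
  rw [hQ]
  have hexp : (1 - (1 - μ)^2 / m) * (Q1 + Q2) = Q1 + Q2 - (1 - μ)^2/m * (Q1 + Q2) := by ring
  rw [hexp]
  have hid : (2 - μ) * μ * (N1 + N2) - N1 - N2 = -((1 - μ)^2 * (N1 + N2)) := by ring
  linarith [hyoungm, hfm, hQN, hid]
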